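/- Let H₁ and H₁' be complementary subspaces of F_p^d (so F_p^d = H₁ ⊕ H₁'), and let π denote the projection onto H₁' along H₁. Let A₁, A₂ be finite multisets in F_p^d and m₁, m₂ positive integers. Suppose m₁*A₁ (the set of sums of m₁-element submultisets of A₁) contains a translate of a subspace H₁ of F_p^d, and m₂*(π(A₂)) contains a translate of a subspace H₂ of H₁'. Then m₁*A₁ + m₂*A₂ contains a translate of the subspace H₁ + H₂. -/
import Mathlib

open Pointwise

/-- The set of sums of submultisets of `A` of cardinality exactly `m`. -/
def mStar {V : Type*} [AddCommMonoid V] (A : Multiset V) (m : ℕ) : Set V :=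
  {x | ∃ B ≤ A, Multiset.card B = m ∧ B.sum = x}

lemma exists_le_map {α β : Type*} [DecidableEq α] [DecidableEq β] {f : α → β}
    {A : Multiset α} {B : Multiset β} (h : B ≤ A.map f) : ∃ C ≤ A, C.map f = B := by
  induction B using Multiset.induction generalizing A with
  | empty => exact ⟨0, Multiset.zero_le _, rfl⟩
  | cons b B ih =>
    have hb : b ∈ A.map f := Multiset.mem_of_le h (Multiset.mem_cons_self _ _)
    obtain ⟨a, ha, rfl⟩ := Multiset.mem_map.mp hb
    have hB : B ≤ (A.erase a).map f := by
      have := Multiset.erase_le_erase (f a) h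
      simpa [Multiset.erase_cons_head, ← Multiset.map_erase_of_mem _ _ ha] using this
    obtain ⟨C, hC, rfl⟩ := ih hB
    exact ⟨a ::ₘ C, by
      calc a ::ₘ C ≤ a ::ₘ A.erase a := Multiset.cons_le_cons _ hC
        _ = A := Multiset.cons_erase ha, by simp⟩

theorem dimension_increment {p d : ℕ} (hp : p.Prime)
    (H₁ H₁' : Submodule (ZMod p) (Fin d → ZMod p)) (hcompl : IsCompl H₁ H₁')
    (π : (Fin d → ZMod p) →ₗ[ZMod p] (Fin d → ZMod p))
    (hker : LinearMap.ker π = H₁) (hrange : LinearMap.range π = H₁')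
    (hproj : ∀ x ∈ H₁', π x = x)
    (A₁ A₂ : Multiset (Fin d → ZMod p)) (m₁ m₂ : ℕ) (hm₁ : 0 < m₁) (hm₂ : 0 < m₂)
    (H₂ : Submodule (ZMod p) (Fin d → ZMod p)) (hH₂ : H₂ ≤ H₁')
    (h1 : ∃ v : Fin d → ZMod p, v +ᵥ (H₁ : Set (Fin d → ZMod p)) ⊆ mStar A₁ m₁)
    (h2 : ∃ v : Fin d → ZMod p, v +ᵥ (H₂ : Set (Fin d → ZMod p)) ⊆ mStar (A₂.map π) m₂) :
    ∃ v : Fin d → ZMod p,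
      v +ᵥ ((H₁ ⊔ H₂ : Submodule (ZMod p) (Fin d → ZMod p)) : Set (Fin d → ZMod p)) ⊆
        mStar A₁ m₁ + mStar A₂ m₂ := by
  obtain ⟨v₁, hv₁⟩ := h1
  obtain ⟨v₂, hv₂⟩ := h2
  have key : ∀ x ∈ mStar (A₂.map π) m₂, x ∈ H₁' ∧ ∃ s ∈ mStar A₂ m₂, π s = x := by
    rintro x ⟨B, hB, hcard, hsum⟩
    obtain ⟨C, hC, rfl⟩ := exists_le_map hB
    have hπ : π C.sum = x := (map_multiset_sum π C).trans hsum
    exact ⟨hrange ▸ ⟨C.sum, hπ⟩, C.sum, ⟨C, hC, by simpa using hcard, rfl⟩, hπ⟩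
  have hv₂mem : v₂ ∈ H₁' := by
    have := hv₂ (Set.vadd_mem_vadd_set (a := v₂) H₂.zero_mem)
    rw [vadd_eq_add, add_zero] at this
    exact (key _ this).1
  refine ⟨v₁ + v₂, ?_⟩
  rintro x ⟨h, hh, rfl⟩
  obtain ⟨a, ha, b, hb, rfl⟩ := Submodule.mem_sup.mp hh
  -- get s₂ ∈ mStar A₂ m₂ with π s₂ = v₂ + b
  have hmem2 : v₂ + b ∈ mStar (A₂.map π) m₂ := by
    have := hv₂ (Set.vadd_mem_vadd_set (a := v₂) hb)
    rwa [vadd_eq_add] at this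
  obtain ⟨-, s₂, hs₂, hπs₂⟩ := key _ hmem2
  set k : Fin d → ZMod p := s₂ - (v₂ + b) with hk
  have hkH₁ : k ∈ H₁ := by
    rw [← hker, LinearMap.mem_ker, hk, map_sub, hπs₂,
      hproj _ (H₁'.add_mem hv₂mem (hH₂ hb)), sub_self]
  have hs₁ : v₁ + (a - k) ∈ mStar A₁ m₁ := by
    have := hv₁ (Set.vadd_mem_vadd_set (a := v₁) (H₁.sub_mem ha hkH₁))
    rwa [vadd_eq_add] at this
  refine Set.mem_add.mpr ⟨v₁ + (a - k), hs₁, s₂, hs₂, ?_⟩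
  have hs₂eq : s₂ = v₂ + b + k := by rw [hk]; abel
  show v₁ + (a - k) + s₂ = (v₁ + v₂) +ᵥ (a + b)
  rw [vadd_eq_add, hs₂eq]
  abel
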